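/- Let G be the (h×r) grid graph, let t ≤ min(h,r) be an integer, let X be the set of vertices in the first column of G and Y the set of vertices in the last column of G. Then for any subsets X' ⊆ X and Y' ⊆ Y with |X'| = |Y'| ≤ t, there exist |X'| vertex-disjoint paths in G connecting the vertices of X' to the vertices of Y'. -/

import Mathlib

/-- The `(h × r)` grid graph on vertex set `Fin h × Fin r`: horizontal edges join
vertices in the same row with consecutive column indices, vertical edges join
vertices in the same column with consecutive row indices. -/
def gridGraph (h r : ℕ) : SimpleGraph (Fin h × Fin r) :=
  SimpleGraph.fromRel (fun a b =>
    (a.1 = b.1 ∧ a.2.val + 1 = b.2.val) ∨ (a.2 = b.2 ∧ a.1.val + 1 = b.1.val))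

namespace GridLinked
open SimpleGraph

lemma pext {h r : ℕ} {u v : Fin h × Fin r} (e1 : u.1 = v.1) (e2 : u.2.1 = v.2.1) : u = v := by
  obtain ⟨u1, u2⟩ := u
  obtain ⟨v1, v2⟩ := v
  simp only at e1 e2
  subst e1
  rw [Fin.ext e2]


/-- One relaxation step toward target `b` in a grid with `h` rows and `k` tokens. -/
def gstep (h k : ℕ) (b q : ℕ → ℕ) : ℕ → ℕ := fun i =>
  max (if i = 0 then 0 else q (i-1) + 1)
    (min (if i + 1 < k then q (i+1) - 1 else h - 1) (b i))

/-- Iterates: `gseq h k b a s` is the configuration after `s` steps starting from `a`. -/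
def gseq (h k : ℕ) (b a : ℕ → ℕ) : ℕ → (ℕ → ℕ)
  | 0 => a
  | s+1 => gstep h k b (gseq h k b a s)

/-- A valid configuration: strictly increasing and bounded by `h`. -/
def Good (h k : ℕ) (q : ℕ → ℕ) : Prop :=
  (∀ i, i + 1 < k → q i < q (i+1)) ∧ (∀ i, i < k → q i < h)

variable {h k : ℕ} {b q p a : ℕ → ℕ}

theorem gstep_legal (hb : Good h k b) (hq : Good h k q) :
    ∀ i, i + 1 < k → max (q i) (gstep h k b q i) < min (q (i+1)) (gstep h k b q (i+1)) := by
  intro i hik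
  have h1 : q i < q (i+1) := hq.1 i hik
  have hb1 : b i < b (i+1) := hb.1 i hik
  have hq1h : q (i+1) < h := hq.2 _ hik
  simp only [gstep, Nat.add_sub_cancel]
  rw [if_neg (by omega : ¬ i + 1 = 0), if_pos hik]
  by_cases hk2 : i + 1 + 1 < k
  · rw [if_pos hk2]
    have h2 : q (i+1) < q (i+1+1) := hq.1 _ hk2
    by_cases hi0 : i = 0
    · rw [if_pos hi0]; omega
    · rw [if_neg hi0]
      have h0 : q (i-1) < q i := by
        have := hq.1 (i-1) (by omega)
        rwa [show i - 1 + 1 = i by omega] at this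
      omega
  · rw [if_neg hk2]
    by_cases hi0 : i = 0
    · rw [if_pos hi0]; omega
    · rw [if_neg hi0]
      have h0 : q (i-1) < q i := by
        have := hq.1 (i-1) (by omega)
        rwa [show i - 1 + 1 = i by omega] at this
      omega

theorem gstep_good (hb : Good h k b) (hq : Good h k q) : Good h k (gstep h k b q) := by
  constructor
  · intro i hik
    have := gstep_legal hb hq i hik
    omega
  · intro i hik
    simp only [gstep]
    have f1 : q i < h := hq.2 i hik
    have f2 : b i < h := hb.2 i hik
    have hlo : (if i = 0 then 0 else q (i-1) + 1) < h := by
      by_cases hi0 : i = 0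
      · rw [if_pos hi0]; omega
      · rw [if_neg hi0]
        have := hq.1 (i-1) (by omega)
        rw [show i - 1 + 1 = i by omega] at this
        omega
    have hhi : (if i + 1 < k then q (i+1) - 1 else h - 1) < h := by
      by_cases hk1 : i + 1 < k
      · rw [if_pos hk1]; have := hq.2 _ hk1; omega
      · rw [if_neg hk1]; omega
    omega

theorem gstep_mono (hqp : ∀ i, i < k → q i ≤ p i) :
    ∀ i, i < k → gstep h k b q i ≤ gstep h k b p i := by
  intro i hik
  simp only [gstep]
  have h1 : (if i = 0 then 0 else q (i-1) + 1) ≤ (if i = 0 then 0 else p (i-1) + 1) := by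
    by_cases hi0 : i = 0
    · simp [hi0]
    · rw [if_neg hi0, if_neg hi0]
      have := hqp (i-1) (by omega); omega
  have h2 : (if i + 1 < k then q (i+1) - 1 else h - 1)
      ≤ (if i + 1 < k then p (i+1) - 1 else h - 1) := by
    by_cases hk1 : i + 1 < k
    · rw [if_pos hk1, if_pos hk1]
      have := hqp (i+1) hk1; omega
    · rw [if_neg hk1, if_neg hk1]
  omega

/-- `b` itself is a fixed point. -/
theorem gstep_fix (hb : Good h k b) : ∀ i, i < k → gstep h k b b i = b i := by
  intro i hik
  simp only [gstep]
  have hbh : b i < h := hb.2 i hik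
  have hlo : (if i = 0 then 0 else b (i-1) + 1) ≤ b i := by
    by_cases hi0 : i = 0
    · rw [if_pos hi0]; omega
    · rw [if_neg hi0]
      have := hb.1 (i-1) (by omega)
      rw [show i - 1 + 1 = i by omega] at this; omega
  have hhi : b i ≤ (if i + 1 < k then b (i+1) - 1 else h - 1) := by
    by_cases hk1 : i + 1 < k
    · rw [if_pos hk1]; have := hb.1 i hk1; omega
    · rw [if_neg hk1]; omega
  omega

theorem good_chain (hq : Good h k q) : ∀ d i, i + d < k → q i + d ≤ q (i + d) := by
  intro d
  induction d with
  | zero => simp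
  | succ d ih =>
    intro i hi
    have h1 := ih i (by omega)
    have h2 := hq.1 (i+d) (by omega)
    have : i + (d+1) = (i+d) + 1 := by omega
    rw [this]
    omega

theorem good_le (hq : Good h k q) : ∀ i, i < k → i ≤ q i ∧ q i + (k - 1 - i) < h := by
  intro i hik
  constructor
  · have := good_chain hq i 0 (by omega)
    simp at this
    omega
  · have h1 := good_chain hq (k - 1 - i) i (by omega)
    rw [show i + (k - 1 - i) = k - 1 by omega] at h1
    have h2 := hq.2 (k-1) (by omega)
    omega

/-- closed form of iterates from the bottom configuration -/
def botCfg (b : ℕ → ℕ) (k s : ℕ) : ℕ → ℕ := fun i => if k - s ≤ i then b i else i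

/-- closed form of iterates from the top configuration -/
def topCfg (b : ℕ → ℕ) (h k s : ℕ) : ℕ → ℕ := fun i => if i < s then b i else h - k + i

theorem gstep_bot (hb : Good h k b) (s : ℕ) :
    ∀ i, i < k → gstep h k b (botCfg b k s) i = botCfg b k (s+1) i := by
  intro i hik
  obtain ⟨hble, hbh⟩ := good_le hb i hik
  simp only [gstep, botCfg]
  by_cases hset : k - s ≤ i
  · -- already settled
    rw [if_pos (by omega : k - (s+1) ≤ i)]
    have hlo : (if i = 0 then 0 else (if k - s ≤ i - 1 then b (i-1) else i-1) + 1) ≤ b i := by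
      by_cases hi0 : i = 0
      · rw [if_pos hi0]; omega
      · rw [if_neg hi0]
        by_cases hs1 : k - s ≤ i - 1
        · rw [if_pos hs1]
          have := hb.1 (i-1) (by omega)
          rw [show i - 1 + 1 = i by omega] at this; omega
        · rw [if_neg hs1]; omega
    have hhi : b i ≤ (if i + 1 < k then (if k - s ≤ i + 1 then b (i+1) else i+1) - 1 else h - 1) := by
      by_cases hk1 : i + 1 < k
      · rw [if_pos hk1, if_pos (by omega : k - s ≤ i + 1)]
        have := hb.1 i hk1; omega
      · rw [if_neg hk1]; omega
    omega
  · by_cases hnew : k - (s+1) ≤ i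
    · -- i = k - s - 1 : settles now
      rw [if_pos hnew]
      have hlo : (if i = 0 then 0 else (if k - s ≤ i - 1 then b (i-1) else i-1) + 1) ≤ b i := by
        by_cases hi0 : i = 0
        · rw [if_pos hi0]; omega
        · rw [if_neg hi0, if_neg (by omega : ¬ k - s ≤ i - 1)]; omega
      have hhi : b i ≤ (if i + 1 < k then (if k - s ≤ i + 1 then b (i+1) else i+1) - 1 else h - 1) := by
        by_cases hk1 : i + 1 < k
        · rw [if_pos hk1, if_pos (by omega : k - s ≤ i + 1)]
          have := hb.1 i hk1; omega
        · rw [if_neg hk1]; omega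
      omega
    · -- stays at i
      rw [if_neg hnew]
      have hlo : (if i = 0 then 0 else (if k - s ≤ i - 1 then b (i-1) else i-1) + 1) = i := by
        by_cases hi0 : i = 0
        · rw [if_pos hi0]; omega
        · rw [if_neg hi0, if_neg (by omega : ¬ k - s ≤ i - 1)]; omega
      have hhi : (if i + 1 < k then (if k - s ≤ i + 1 then b (i+1) else i+1) - 1 else h - 1) = i := by
        rw [if_pos (by omega : i + 1 < k), if_neg (by omega : ¬ k - s ≤ i + 1)]
        omega
      rw [hlo, hhi]
      omega

theorem gstep_top (hb : Good h k b) (s : ℕ) :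
    ∀ i, i < k → gstep h k b (topCfg b h k s) i = topCfg b h k (s+1) i := by
  intro i hik
  obtain ⟨hble, hbh⟩ := good_le hb i hik
  simp only [gstep, topCfg]
  by_cases hset : i < s
  · rw [if_pos (by omega : i < s + 1)]
    have hlo : (if i = 0 then 0 else (if i - 1 < s then b (i-1) else h - k + (i-1)) + 1) ≤ b i := by
      by_cases hi0 : i = 0
      · rw [if_pos hi0]; omega
      · rw [if_neg hi0, if_pos (by omega : i - 1 < s)]
        have := hb.1 (i-1) (by omega)
        rw [show i - 1 + 1 = i by omega] at this; omega
    have hhi : b i ≤ (if i + 1 < k then (if i + 1 < s then b (i+1) else h - k + (i+1)) - 1 else h - 1) := by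
      by_cases hk1 : i + 1 < k
      · rw [if_pos hk1]
        by_cases hs1 : i + 1 < s
        · rw [if_pos hs1]; have := hb.1 i hk1; omega
        · rw [if_neg hs1]; omega
      · rw [if_neg hk1]; omega
    omega
  · by_cases hnew : i < s + 1
    · -- i = s : settles now
      rw [if_pos hnew]
      have hlo : (if i = 0 then 0 else (if i - 1 < s then b (i-1) else h - k + (i-1)) + 1) ≤ b i := by
        by_cases hi0 : i = 0
        · rw [if_pos hi0]; omega
        · rw [if_neg hi0, if_pos (by omega : i - 1 < s)]
          have := hb.1 (i-1) (by omega)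
          rw [show i - 1 + 1 = i by omega] at this; omega
      have hhi : b i ≤ (if i + 1 < k then (if i + 1 < s then b (i+1) else h - k + (i+1)) - 1 else h - 1) := by
        by_cases hk1 : i + 1 < k
        · rw [if_pos hk1, if_neg (by omega : ¬ i + 1 < s)]; omega
        · rw [if_neg hk1]; omega
      omega
    · -- stays at h - k + i ; here i ≥ s + 1 so i ≥ 1 and i - 1 ≥ s
      rw [if_neg hnew]
      have hlo : (if i = 0 then 0 else (if i - 1 < s then b (i-1) else h - k + (i-1)) + 1)
          = h - k + i := by
        rw [if_neg (by omega : ¬ i = 0), if_neg (by omega : ¬ i - 1 < s)]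
        omega
      have hhi : (if i + 1 < k then (if i + 1 < s then b (i+1) else h - k + (i+1)) - 1 else h - 1)
          = h - k + i := by
        by_cases hk1 : i + 1 < k
        · rw [if_pos hk1, if_neg (by omega : ¬ i + 1 < s)]; omega
        · rw [if_neg hk1]; omega
      rw [hlo, hhi]
      omega

theorem gstep_congr (hqq : ∀ i, i < k → q i = p i) :
    ∀ i, i < k → gstep h k b q i = gstep h k b p i := by
  intro i hik
  have h1 := gstep_mono (b := b) (h := h) (fun i hi => le_of_eq (hqq i hi)) i hik
  have h2 := gstep_mono (b := b) (h := h) (fun i hi => ge_of_eq (hqq i hi)) i hik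
  omega

theorem gseq_good (hb : Good h k b) (ha : Good h k a) (s : ℕ) : Good h k (gseq h k b a s) := by
  induction s with
  | zero => exact ha
  | succ s ih => exact gstep_good hb ih

/-- sandwich: the iterates are between `botCfg` and `topCfg`. -/
theorem gseq_sandwich (hb : Good h k b) (ha : Good h k a) (s : ℕ) :
    ∀ i, i < k → botCfg b k s i ≤ gseq h k b a s i ∧ gseq h k b a s i ≤ topCfg b h k s i := by
  induction s with
  | zero =>
    intro i hik
    obtain ⟨h1, h2⟩ := good_le ha i hik
    simp only [botCfg, topCfg, gseq]
    constructor
    · split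
      · omega
      · omega
    · rw [if_neg (by omega : ¬ i < 0)]; omega
  | succ s ih =>
    intro i hik
    constructor
    · rw [← gstep_bot hb s i hik]
      exact gstep_mono (fun j hj => (ih j hj).1) i hik
    · rw [show gseq h k b a (s+1) = gstep h k b (gseq h k b a s) from rfl,
        ← gstep_top hb s i hik]
      exact gstep_mono (fun j hj => (ih j hj).2) i hik

theorem gseq_converge (hb : Good h k b) (ha : Good h k a) :
    ∀ s, k ≤ s → ∀ i, i < k → gseq h k b a s i = b i := by
  intro s hs
  induction s with
  | zero =>
    intro i hik; omega
  | succ s ih =>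
    rcases Nat.lt_or_ge s k with hsk | hsk
    ·
      intro i hik
      have hsw := gseq_sandwich hb ha (s+1) i hik
      simp only [botCfg, topCfg] at hsw
      rw [if_pos (by omega : k - (s+1) ≤ i), if_pos (by omega : i < s + 1)] at hsw
      omega
    · intro i hik
      have he : ∀ j, j < k → gseq h k b a s j = b j := ih hsk
      calc gseq h k b a (s+1) i = gstep h k b (gseq h k b a s) i := rfl
        _ = gstep h k b b i := gstep_congr he i hik
        _ = b i := gstep_fix hb i hik

/-- The full crossing property for arbitrary pairs `i < j`. -/
theorem gseq_cross (hb : Good h k b) (ha : Good h k a) (s : ℕ) :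
    ∀ i j, i < j → j < k →
      max (gseq h k b a s i) (gseq h k b a (s+1) i)
        < min (gseq h k b a s j) (gseq h k b a (s+1) j) := by
  intro i j hij hjk
  induction j with
  | zero => omega
  | succ j ihj =>
    have hstep := gstep_legal hb (gseq_good hb ha s) j (by omega)
    have e1 : gstep h k b (gseq h k b a s) j = gseq h k b a (s+1) j := rfl
    have e2 : gstep h k b (gseq h k b a s) (j+1) = gseq h k b a (s+1) (j+1) := rfl
    rw [e1, e2] at hstep
    rcases Nat.lt_or_ge i j with hij' | hij'
    · have := ihj hij' (by omega)
      have hgj : gseq h k b a s j < gseq h k b a s (j+1) := (gseq_good hb ha s).1 j (by omega)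
      omega
    · have : i = j := by omega
      subst this
      exact hstep

variable {h r : ℕ}
lemma vmk {x y c d : ℕ} {hx : x < h} {hy : y < h} {hc : c < r} {hd : d < r}
    (e1 : x = y) (e2 : c = d) :
    ((⟨x, hx⟩ : Fin h), (⟨c, hc⟩ : Fin r)) = ((⟨y, hy⟩ : Fin h), (⟨d, hd⟩ : Fin r)) := by
  subst e1; subst e2; rfl

lemma vmk1 {x y : ℕ} {hx : x < h} {hy : y < h} (c : Fin r) (e1 : x = y) :
    ((⟨x, hx⟩ : Fin h), c) = ((⟨y, hy⟩ : Fin h), c) := by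
  subst e1; rfl

lemma adj_vert {x c : ℕ} (hx : x + 1 < h) (hc : c < r) :
    (gridGraph h r).Adj (⟨x, by omega⟩, ⟨c, hc⟩) (⟨x+1, hx⟩, ⟨c, hc⟩) := by
  rw [gridGraph, SimpleGraph.fromRel_adj]
  refine ⟨?_, Or.inl (Or.inr ⟨rfl, rfl⟩)⟩
  intro hcon
  have := congrArg (fun v => v.1.val) hcon
  simp at this

lemma adj_horiz {x c : ℕ} (hx : x < h) (hc : c + 1 < r) :
    (gridGraph h r).Adj (⟨x, hx⟩, ⟨c, by omega⟩) (⟨x, hx⟩, ⟨c+1, hc⟩) := by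
  rw [gridGraph, SimpleGraph.fromRel_adj]
  refine ⟨?_, Or.inl (Or.inl ⟨rfl, rfl⟩)⟩
  intro hcon
  have := congrArg (fun v => v.2.val) hcon
  simp at this

def downWalk (c : Fin r) : (x d : ℕ) → (hd : x + d < h) →
    (gridGraph h r).Walk (⟨x, by omega⟩, c) (⟨x + d, hd⟩, c)
  | _, 0, _ => SimpleGraph.Walk.nil
  | x, d+1, hd =>
      SimpleGraph.Walk.cons (adj_vert (by omega) c.2)
        ((downWalk c (x+1) d (by omega)).copy rfl (vmk1 c (by omega)))

lemma downWalk_support (c : Fin r) : ∀ (x d : ℕ) (hd : x + d < h),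
    ∀ v ∈ (downWalk c x d hd).support, v.2 = c ∧ x ≤ v.1.1 ∧ v.1.1 ≤ x + d := by
  intro x d
  induction d generalizing x with
  | zero =>
    intro hd v hv
    simp [downWalk] at hv
    subst hv
    refine ⟨rfl, ?_, ?_⟩ <;> simp
  | succ d ih =>
    intro hd v hv
    rw [downWalk] at hv
    simp only [SimpleGraph.Walk.support_cons, SimpleGraph.Walk.support_copy,
      List.mem_cons] at hv
    rcases hv with hv | hv
    · subst hv
      refine ⟨rfl, ?_, ?_⟩ <;> simp
    · obtain ⟨h1, h2, h3⟩ := ih (x+1) (by omega) v hv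
      exact ⟨h1, by omega, by omega⟩

lemma downWalk_rows (c : Fin r) : ∀ (x d : ℕ) (hd : x + d < h),
    ((downWalk c x d hd).support.map (fun v => v.1.1)) = List.range' x (d+1) := by
  intro x d
  induction d generalizing x with
  | zero =>
    intro hd
    simp [downWalk, List.range']
  | succ d ih =>
    intro hd
    rw [downWalk]
    simp only [SimpleGraph.Walk.support_cons, SimpleGraph.Walk.support_copy, List.map_cons]
    rw [ih (x+1) (by omega)]
    conv_rhs => rw [List.range'_succ]

lemma downWalk_nodup (c : Fin r) (x d : ℕ) (hd : x + d < h) :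
    (downWalk c x d hd).support.Nodup :=
  List.Nodup.of_map _ (by rw [downWalk_rows]; exact List.nodup_range')

def vwalk (c : Fin r) (x y : ℕ) (hx : x < h) (hy : y < h) :
    (gridGraph h r).Walk (⟨x, hx⟩, c) (⟨y, hy⟩, c) :=
  if hxy : x ≤ y then
    (downWalk c x (y - x) (by omega)).copy rfl (vmk1 c (by omega))
  else
    ((downWalk c y (x - y) (by omega)).copy rfl (vmk1 c (by omega))).reverse

lemma vwalk_support (c : Fin r) (x y : ℕ) (hx : x < h) (hy : y < h) :
    ∀ v ∈ (vwalk c x y hx hy).support,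
      v.2 = c ∧ min x y ≤ v.1.1 ∧ v.1.1 ≤ max x y := by
  intro v hv
  unfold vwalk at hv
  split_ifs at hv with hxy
  · rw [SimpleGraph.Walk.support_copy] at hv
    obtain ⟨h1, h2, h3⟩ := downWalk_support c x (y - x) (by omega) v hv
    exact ⟨h1, by omega, by omega⟩
  · rw [SimpleGraph.Walk.support_reverse, List.mem_reverse,
      SimpleGraph.Walk.support_copy] at hv
    obtain ⟨h1, h2, h3⟩ := downWalk_support c y (x - y) (by omega) v hv
    exact ⟨h1, by omega, by omega⟩

lemma vwalk_nodup (c : Fin r) (x y : ℕ) (hx : x < h) (hy : y < h) :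
    (vwalk c x y hx hy).support.Nodup := by
  unfold vwalk
  split_ifs with hxy
  · rw [SimpleGraph.Walk.support_copy]
    exact downWalk_nodup _ _ _ _
  · rw [SimpleGraph.Walk.support_reverse, SimpleGraph.Walk.support_copy]
    exact List.nodup_reverse.mpr (downWalk_nodup _ _ _ _)

def mainWalk (f : ℕ → ℕ) (hf : ∀ c, f c < h) : (n c : ℕ) → (hc : c + n + 1 = r) →
    (gridGraph h r).Walk (⟨f c, hf c⟩, ⟨c, by omega⟩) (⟨f r, hf r⟩, ⟨r - 1, by omega⟩)
  | 0, c, hc =>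
    (vwalk ⟨c, by omega⟩ (f c) (f (c+1)) (hf c) (hf (c+1))).copy rfl
      (vmk (by rw [show c + 1 = r by omega]) (by omega))
  | n+1, c, hc =>
    (vwalk ⟨c, by omega⟩ (f c) (f (c+1)) (hf c) (hf (c+1))).append
      (SimpleGraph.Walk.cons (adj_horiz (hf (c+1)) (by omega : c + 1 < r))
        (mainWalk f hf n (c+1) (by omega)))

lemma mainWalk_support (f : ℕ → ℕ) (hf : ∀ c, f c < h) :
    ∀ (n c : ℕ) (hc : c + n + 1 = r), ∀ v ∈ (mainWalk f hf n c hc).support,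
      c ≤ v.2.1 ∧ min (f v.2.1) (f (v.2.1 + 1)) ≤ v.1.1
        ∧ v.1.1 ≤ max (f v.2.1) (f (v.2.1 + 1)) := by
  intro n
  induction n with
  | zero =>
    intro c hc v hv
    rw [mainWalk, SimpleGraph.Walk.support_copy] at hv
    obtain ⟨h1, h2, h3⟩ := vwalk_support _ _ _ _ _ v hv
    rw [h1]
    exact ⟨le_refl _, h2, h3⟩
  | succ n ih =>
    intro c hc v hv
    rw [mainWalk, SimpleGraph.Walk.mem_support_append_iff] at hv
    rcases hv with hv | hv
    · obtain ⟨h1, h2, h3⟩ := vwalk_support _ _ _ _ _ v hv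
      rw [h1]
      exact ⟨le_refl _, h2, h3⟩
    · rw [SimpleGraph.Walk.support_cons, List.mem_cons] at hv
      rcases hv with hv | hv
      · subst hv
        refine ⟨by simp, ?_, ?_⟩ <;> simp
      · obtain ⟨h1, h2, h3⟩ := ih (c+1) (by omega) v hv
        exact ⟨by omega, h2, h3⟩

lemma mainWalk_nodup (f : ℕ → ℕ) (hf : ∀ c, f c < h) :
    ∀ (n c : ℕ) (hc : c + n + 1 = r), (mainWalk f hf n c hc).support.Nodup := by
  intro n
  induction n with
  | zero =>
    intro c hc
    rw [mainWalk, SimpleGraph.Walk.support_copy]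
    exact vwalk_nodup _ _ _ _ _
  | succ n ih =>
    intro c hc
    rw [mainWalk, SimpleGraph.Walk.support_append]
    refine List.Nodup.append (vwalk_nodup _ _ _ _ _) ?_ ?_
    · rw [SimpleGraph.Walk.support_cons]
      exact (ih (c+1) (by omega))
    · intro v hv1 hv2
      obtain ⟨h1, _, _⟩ := vwalk_support _ _ _ _ _ v hv1
      rw [SimpleGraph.Walk.support_cons] at hv2
      rw [List.tail_cons] at hv2
      obtain ⟨h2, _, _⟩ := mainWalk_support f hf n (c+1) (by omega) v hv2
      rw [h1] at h2
      simp at h2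

theorem exists_walks (h r k : ℕ) (hk : 0 < k) (hkr : k ≤ r) (a b : ℕ → ℕ)
    (ha : Good h k a) (hb : Good h k b) :
    ∃ W : (i : Fin k) → (gridGraph h r).Walk
        (⟨a i.1, ha.2 i.1 i.2⟩, ⟨0, by omega⟩) (⟨b i.1, hb.2 i.1 i.2⟩, ⟨r - 1, by omega⟩),
      (∀ i, (W i).IsPath) ∧
      (∀ i j, i ≠ j → ∀ v, v ∈ (W i).support → v ∉ (W j).support) := by
  have hr0 : 0 < r := by omega
  set Q : ℕ → ℕ → ℕ := gseq h k b a with hQ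
  have hQg : ∀ s, Good h k (Q s) := fun s => gseq_good hb ha s
  have hf : ∀ (i : Fin k) (c : ℕ), Q c i.1 < h := fun i c => (hQg c).2 i.1 i.2
  have hQr : ∀ i : Fin k, Q r i.1 = b i.1 := fun i => gseq_converge hb ha r hkr i.1 i.2
  have hQ0 : ∀ i : Fin k, Q 0 i.1 = a i.1 := fun i => rfl
  have hrc : 0 + (r - 1) + 1 = r := by omega
  refine ⟨fun i => (mainWalk (fun c => Q c i.1) (hf i) (r-1) 0 hrc).copy
    (vmk (hQ0 i) rfl) (vmk (hQr i) rfl), ?_, ?_⟩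
  · intro i
    exact SimpleGraph.Walk.IsPath.mk'
      (by rw [SimpleGraph.Walk.support_copy]; exact mainWalk_nodup _ _ _ _ _)
  · have key : ∀ i j : Fin k, i < j → ∀ v, v ∈ ((mainWalk (fun c => Q c i.1) (hf i) (r-1) 0
        hrc).support) → v ∈ ((mainWalk (fun c => Q c j.1) (hf j) (r-1) 0
        hrc).support) → False := by
      intro i j hij v hvi hvj
      obtain ⟨-, hi1, hi2⟩ := mainWalk_support _ (hf i) _ _ _ v hvi
      obtain ⟨-, hj1, hj2⟩ := mainWalk_support _ (hf j) _ _ _ v hvj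
      have hcross := gseq_cross hb ha v.2.1 i.1 j.1 (by exact_mod_cast hij) j.2
      rw [← hQ] at hcross
      omega
    intro i j hij v hvi hvj
    rw [SimpleGraph.Walk.support_copy] at hvi hvj
    rcases lt_or_gt_of_ne hij with hlt | hgt
    · exact key i j hlt v hvi hvj
    · exact key j i hgt v hvj hvi


end GridLinked

/-- In the `(h × r)` grid, for any `t ≤ min(h, r)`, any subsets `X'` of the first
column and `Y'` of the last column with `|X'| = |Y'| ≤ t` can be linked by
`|X'|` vertex-disjoint paths (a bijection `σ : X' ≃ Y'` together with pairwise
vertex-disjoint paths from each `x ∈ X'` to `σ x ∈ Y'`). -/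
theorem grid_t_linked (h r t : ℕ) (hth : t ≤ h) (htr : t ≤ r)
    (X' Y' : Finset (Fin h × Fin r))
    (hX : ∀ x ∈ X', x.2.val = 0) (hY : ∀ y ∈ Y', y.2.val = r - 1)
    (hcard : X'.card = Y'.card) (hle : X'.card ≤ t) :
    ∃ (σ : ↥X' ≃ ↥Y') (P : ∀ x : ↥X', (gridGraph h r).Walk (x : Fin h × Fin r) ((σ x : Fin h × Fin r))),
      (∀ x, (P x).IsPath) ∧
      (∀ x y, x ≠ y → ∀ v, v ∈ (P x).support → v ∉ (P y).support) := by
  rcases Nat.eq_zero_or_pos X'.card with hk0 | hk0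
  · -- empty case
    have hX'e : X' = ∅ := Finset.card_eq_zero.mp hk0
    have hY'e : Y' = ∅ := Finset.card_eq_zero.mp (hcard ▸ hk0)
    subst hX'e hY'e
    exact ⟨Equiv.equivOfIsEmpty _ _, fun x => isEmptyElim x, fun x => isEmptyElim x,
      fun x => isEmptyElim x⟩
  · set k := X'.card with hkdef
    have hkr : k ≤ r := le_trans hle htr
    have hr0 : 0 < r := by omega
    have hrr : r - 1 < r := by omega
    -- rows of X' and Y'
    set rowsX : Finset (Fin h) := X'.image Prod.fst with hrXdef
    set rowsY : Finset (Fin h) := Y'.image Prod.fst with hrYdef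
    have hinjX : Set.InjOn Prod.fst (X' : Set (Fin h × Fin r)) := by
      intro x hx y hy e
      exact GridLinked.pext e (by rw [hX x hx, hX y hy])
    have hinjY : Set.InjOn Prod.fst (Y' : Set (Fin h × Fin r)) := by
      intro x hx y hy e
      exact GridLinked.pext e (by rw [hY x hx, hY y hy])
    have hkX : rowsX.card = k := Finset.card_image_of_injOn hinjX
    have hkY : rowsY.card = k := by
      rw [hrYdef, Finset.card_image_of_injOn hinjY, ← hcard]
    set eX := rowsX.orderIsoOfFin hkX with heXdef
    set eY := rowsY.orderIsoOfFin hkY with heYdef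
    set afun : ℕ → ℕ := fun n => if hn : n < k then ((eX ⟨n, hn⟩ : Fin h) : ℕ) else 0
      with hadef
    set bfun : ℕ → ℕ := fun n => if hn : n < k then ((eY ⟨n, hn⟩ : Fin h) : ℕ) else 0
      with hbdef
    have hafun : ∀ i : Fin k, afun i.1 = ((eX i : Fin h) : ℕ) := by
      intro i
      rw [hadef]
      simp only [dif_pos i.2, Fin.eta]
    have hbfun : ∀ i : Fin k, bfun i.1 = ((eY i : Fin h) : ℕ) := by
      intro i
      rw [hbdef]
      simp only [dif_pos i.2, Fin.eta]
    have haGood : GridLinked.Good h k afun := by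
      constructor
      · intro i hik
        have h1 : afun i = ((eX ⟨i, by omega⟩ : Fin h) : ℕ) := hafun ⟨i, by omega⟩
        have h2 : afun (i+1) = ((eX ⟨i+1, by omega⟩ : Fin h) : ℕ) := hafun ⟨i+1, by omega⟩
        rw [h1, h2]
        have := eX.strictMono (show (⟨i, by omega⟩ : Fin k) < ⟨i+1, by omega⟩ by
          rw [Fin.mk_lt_mk]; omega)
        exact this
      · intro i hik
        rw [hafun ⟨i, hik⟩]
        exact ((eX ⟨i, hik⟩ : Fin h)).2
    have hbGood : GridLinked.Good h k bfun := by
      constructor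
      · intro i hik
        rw [hbfun ⟨i, by omega⟩, hbfun ⟨i+1, by omega⟩]
        exact eY.strictMono (show (⟨i, by omega⟩ : Fin k) < ⟨i+1, by omega⟩ by
          rw [Fin.mk_lt_mk]; omega)
      · intro i hik
        rw [hbfun ⟨i, hik⟩]
        exact ((eY ⟨i, hik⟩ : Fin h)).2
    -- membership of reconstructed pairs
    have memX : ∀ s : ↥rowsX, (((s : Fin h), (⟨0, hr0⟩ : Fin r)) : Fin h × Fin r) ∈ X' := by
      intro s
      obtain ⟨p, hp, hps⟩ := Finset.mem_image.mp s.2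
      have : p = ((s : Fin h), (⟨0, hr0⟩ : Fin r)) := GridLinked.pext hps (hX p hp)
      rwa [← this]
    have memY : ∀ s : ↥rowsY, (((s : Fin h), (⟨r-1, hrr⟩ : Fin r)) : Fin h × Fin r) ∈ Y' := by
      intro s
      obtain ⟨p, hp, hps⟩ := Finset.mem_image.mp s.2
      have : p = ((s : Fin h), (⟨r-1, hrr⟩ : Fin r)) := GridLinked.pext hps (hY p hp)
      rwa [← this]
    -- the equivalences
    set e1 : ↥X' ≃ ↥rowsX :=
      { toFun := fun x => ⟨x.1.1, Finset.mem_image_of_mem Prod.fst x.2⟩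
        invFun := fun s => ⟨((s : Fin h), ⟨0, hr0⟩), memX s⟩
        left_inv := fun x => Subtype.ext (GridLinked.pext rfl (hX x.1 x.2).symm)
        right_inv := fun s => rfl } with he1def
    set e4 : ↥rowsY ≃ ↥Y' :=
      { toFun := fun s => ⟨((s : Fin h), ⟨r-1, hrr⟩), memY s⟩
        invFun := fun y => ⟨y.1.1, Finset.mem_image_of_mem Prod.fst y.2⟩
        left_inv := fun s => rfl
        right_inv := fun y => Subtype.ext (GridLinked.pext rfl (hY y.1 y.2).symm) } with he4def
    set σ : ↥X' ≃ ↥Y' := e1.trans ((eX.symm.toEquiv).trans ((eY.toEquiv).trans e4))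
      with hσdef
    set idx : ↥X' → Fin k := fun x => eX.symm (e1 x) with hidxdef
    have hidxinj : Function.Injective idx :=
      (eX.symm.injective).comp e1.injective
    obtain ⟨W, hWpath, hWdisj⟩ := GridLinked.exists_walks h r k hk0 hkr afun bfun haGood hbGood
    -- endpoint identifications
    have eq1 : ∀ x : ↥X',
        ((⟨afun (idx x).1, haGood.2 _ (idx x).2⟩ : Fin h), (⟨0, by omega⟩ : Fin r))
          = (x : Fin h × Fin r) := by
      intro x
      refine GridLinked.pext ?_ ?_
      · refine Fin.ext ?_
        show afun (idx x).1 = ((x : Fin h × Fin r).1 : ℕ)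
        rw [hafun (idx x), hidxdef]
        simp only [OrderIso.apply_symm_apply]
        rfl
      · exact (hX x.1 x.2).symm
    have eq2 : ∀ x : ↥X',
        ((⟨bfun (idx x).1, hbGood.2 _ (idx x).2⟩ : Fin h), (⟨r - 1, by omega⟩ : Fin r))
          = ((σ x : ↥Y') : Fin h × Fin r) := by
      intro x
      refine GridLinked.pext ?_ ?_
      · refine Fin.ext ?_
        show bfun (idx x).1 = (((σ x : ↥Y') : Fin h × Fin r).1 : ℕ)
        rw [hbfun (idx x)]
        rfl
      · rfl
    refine ⟨σ, fun x => (W (idx x)).copy (eq1 x) (eq2 x), ?_, ?_⟩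
    · intro x
      exact SimpleGraph.Walk.IsPath.mk'
        (by rw [SimpleGraph.Walk.support_copy]; exact (hWpath (idx x)).support_nodup)
    · intro x y hxy v hv1 hv2
      rw [SimpleGraph.Walk.support_copy] at hv1 hv2
      exact hWdisj (idx x) (idx y) (fun e => hxy (hidxinj e)) v hv1 hv2
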